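/- Fix μ₁ < μ₂ ∈ ℝ, π ∈ (0,1) and x ∈ ℝ with x < (μ₁+μ₂)/2. Writing p_σ(x) = π φ_{μ₁,σ}(x) + (1−π) φ_{μ₂,σ}(x), one has s_{p_σ}(x) + (x−μ₁)/σ² → 0 as σ → 0⁺; that is, the mixture score converges to the score of the left Gaussian component even though both quantities individually diverge. -/

import Mathlib

open MeasureTheory Filter

/-- Gaussian density with mean `μ` and standard deviation `σ`. -/
noncomputable def gaussian (μ σ : ℝ) (x : ℝ) : ℝ :=
  (σ * Real.sqrt (2 * Real.pi))⁻¹ * Real.exp (-(x - μ) ^ 2 / (2 * σ ^ 2))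

/-- The score of a density `ρ`: the derivative of its log. -/
noncomputable def score (ρ : ℝ → ℝ) (x : ℝ) : ℝ :=
  deriv (fun y => Real.log (ρ y)) x

/-- Fisher divergence between densities `q` and `p`. -/
noncomputable def fisherDiv (q p : ℝ → ℝ) : ℝ :=
  ∫ x : ℝ, q x * (score q x - score p x) ^ 2

lemma gaussian_pos {μ σ : ℝ} (hσ : 0 < σ) (x : ℝ) : 0 < gaussian μ σ x := by
  unfold gaussian
  have h2π : (0:ℝ) < 2 * Real.pi := by positivity
  positivity

lemma hasDerivAt_gaussian {μ σ : ℝ} (hσ : σ ≠ 0) (x : ℝ) :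
    HasDerivAt (gaussian μ σ) (-((x - μ) / σ ^ 2) * gaussian μ σ x) x := by
  have h1 : HasDerivAt (fun y : ℝ => y - μ) 1 x := (hasDerivAt_id x).sub_const μ
  have h2 : HasDerivAt (fun y : ℝ => (y - μ) ^ 2) (2 * (x - μ)) x := by
    simpa using h1.fun_pow 2
  have h3 : HasDerivAt (fun y : ℝ => -(y - μ) ^ 2 / (2 * σ ^ 2))
      (-(2 * (x - μ)) / (2 * σ ^ 2)) x := h2.neg.div_const _
  have h4 := (h3.exp).const_mul ((σ * Real.sqrt (2 * Real.pi))⁻¹)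
  refine h4.congr_deriv ?_
  unfold gaussian
  field_simp

lemma gaussian_ratio {μ₁ μ₂ σ : ℝ} (hσ : σ ≠ 0) (x : ℝ) :
    gaussian μ₂ σ x
      = gaussian μ₁ σ x * Real.exp (((x - μ₁) ^ 2 - (x - μ₂) ^ 2) / (2 * σ ^ 2)) := by
  unfold gaussian
  rw [mul_assoc, ← Real.exp_add]
  congr 2
  field_simp
  ring

/-- left of the midpoint, as `σ → 0⁺` the mixture score converges to
the score of the left Gaussian component. -/
theorem mixture_score_left_of_midpoint (μ₁ μ₂ w : ℝ) (hμ : μ₁ < μ₂)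
    (hw : w ∈ Set.Ioo (0 : ℝ) 1) (x : ℝ) (hx : x < (μ₁ + μ₂) / 2) :
    Tendsto
      (fun σ => score (fun y => w * gaussian μ₁ σ y + (1 - w) * gaussian μ₂ σ y) x
        + (x - μ₁) / σ ^ 2)
      (nhdsWithin 0 (Set.Ioi 0)) (nhds 0) := by
  obtain ⟨hw0, hw1⟩ := hw
  have hw1' : 0 < 1 - w := by linarith
  set c : ℝ := (x - μ₁) ^ 2 - (x - μ₂) ^ 2 with hc
  have hcneg : c < 0 := by nlinarith
  -- the function coincides with an explicit expression on `Ioi 0`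
  have key : ∀ σ : ℝ, 0 < σ →
      score (fun y => w * gaussian μ₁ σ y + (1 - w) * gaussian μ₂ σ y) x
        + (x - μ₁) / σ ^ 2
      = (1 - w) * (μ₂ - μ₁) * Real.exp (c / (2 * σ ^ 2))
          / (σ ^ 2 * (w + (1 - w) * Real.exp (c / (2 * σ ^ 2)))) := by
    intro σ hσ
    have hσ' : σ ≠ 0 := ne_of_gt hσ
    set g1 := gaussian μ₁ σ x with hg1
    set g2 := gaussian μ₂ σ x with hg2
    have hg1pos : 0 < g1 := gaussian_pos hσ x
    have hg2pos : 0 < g2 := gaussian_pos hσ x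
    have hP : 0 < w * g1 + (1 - w) * g2 := by positivity
    have hD : HasDerivAt (fun y => w * gaussian μ₁ σ y + (1 - w) * gaussian μ₂ σ y)
        (w * (-((x - μ₁) / σ ^ 2) * g1) + (1 - w) * (-((x - μ₂) / σ ^ 2) * g2)) x :=
      ((hasDerivAt_gaussian hσ' x).const_mul w).add
        ((hasDerivAt_gaussian hσ' x).const_mul (1 - w))
    have hlog := hD.log (ne_of_gt hP)
    have hscore : score (fun y => w * gaussian μ₁ σ y + (1 - w) * gaussian μ₂ σ y) x
        = (w * (-((x - μ₁) / σ ^ 2) * g1) + (1 - w) * (-((x - μ₂) / σ ^ 2) * g2))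
          / (w * g1 + (1 - w) * g2) := hlog.deriv
    rw [hscore]
    have hr : g2 = g1 * Real.exp (c / (2 * σ ^ 2)) := gaussian_ratio hσ' x
    rw [hr]
    have hexp : 0 < Real.exp (c / (2 * σ ^ 2)) := Real.exp_pos _
    have hden : 0 < w + (1 - w) * Real.exp (c / (2 * σ ^ 2)) := by positivity
    field_simp
    ring
  -- the explicit expression tends to 0
  have hb : 0 < -(c / 2) := by linarith
  have hcomp : Tendsto (fun σ : ℝ => (σ ^ 2)⁻¹ * Real.exp (c / (2 * σ ^ 2)))
      (nhdsWithin 0 (Set.Ioi 0)) (nhds 0) := by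
    have h1 : Tendsto (fun σ : ℝ => (σ ^ 2)⁻¹) (nhdsWithin 0 (Set.Ioi 0)) atTop := by
      have hsq : Tendsto (fun σ : ℝ => σ ^ 2) (nhdsWithin 0 (Set.Ioi 0))
          (nhdsWithin 0 (Set.Ioi 0)) := by
        apply tendsto_nhdsWithin_of_tendsto_nhds_of_eventually_within
        · have : Tendsto (fun σ : ℝ => σ ^ 2) (nhds 0) (nhds 0) := by
            simpa using ((continuous_pow 2).tendsto (0:ℝ))
          exact this.mono_left nhdsWithin_le_nhds
        · filter_upwards [self_mem_nhdsWithin] with σ hσ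
          exact pow_pos (Set.mem_Ioi.mp hσ) 2
      exact tendsto_inv_nhdsGT_zero.comp hsq
    have h2 : Tendsto (fun u : ℝ => u * Real.exp (c / 2 * u)) atTop (nhds 0) := by
      have h3 : Tendsto (fun u : ℝ => u ^ 1 * Real.exp (-u)) atTop (nhds 0) :=
        Real.tendsto_pow_mul_exp_neg_atTop_nhds_zero 1
      have h4 : Tendsto (fun u : ℝ => -(c / 2) * u) atTop atTop :=
        Tendsto.const_mul_atTop hb tendsto_id
      have h5 := (h3.comp h4).const_mul (-(c / 2))⁻¹
      rw [mul_zero] at h5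
      refine h5.congr fun u => ?_
      have : -(c / 2) ≠ 0 := ne_of_gt hb
      simp only [Function.comp_apply, pow_one]
      rw [show -(-(c / 2) * u) = c / 2 * u by ring]
      have hc0 : c ≠ 0 := ne_of_lt hcneg
      field_simp
    refine (h2.comp h1).congr fun σ => ?_
    simp only [Function.comp_apply]
    rw [show c / 2 * (σ ^ 2)⁻¹ = c / (2 * σ ^ 2) by ring]
  have hlim : Tendsto (fun σ : ℝ => (1 - w) * (μ₂ - μ₁) / w *
      ((σ ^ 2)⁻¹ * Real.exp (c / (2 * σ ^ 2)))) (nhdsWithin 0 (Set.Ioi 0)) (nhds 0) := by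
    simpa using hcomp.const_mul ((1 - w) * (μ₂ - μ₁) / w)
  refine squeeze_zero' ?_ ?_ hlim
  · filter_upwards [self_mem_nhdsWithin] with σ hσ
    rw [key σ hσ]
    have hexp : 0 < Real.exp (c / (2 * σ ^ 2)) := Real.exp_pos _
    have hden : 0 < w + (1 - w) * Real.exp (c / (2 * σ ^ 2)) := by positivity
    have hσ2 : 0 < σ ^ 2 := pow_pos hσ 2
    have hA : (0:ℝ) < (1 - w) * (μ₂ - μ₁) * Real.exp (c / (2 * σ ^ 2)) :=
      mul_pos (mul_pos hw1' (sub_pos.mpr hμ)) hexp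
    positivity
  · filter_upwards [self_mem_nhdsWithin] with σ hσ
    rw [key σ hσ]
    have hexp : 0 < Real.exp (c / (2 * σ ^ 2)) := Real.exp_pos _
    have hden : w ≤ w + (1 - w) * Real.exp (c / (2 * σ ^ 2)) := by nlinarith
    have hσ2 : 0 < σ ^ 2 := pow_pos hσ 2
    rw [div_le_iff₀ (by positivity)]
    have h1 : (1 - w) * (μ₂ - μ₁) / w * ((σ ^ 2)⁻¹ * Real.exp (c / (2 * σ ^ 2)))
        * (σ ^ 2 * (w + (1 - w) * Real.exp (c / (2 * σ ^ 2))))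
        = (1 - w) * (μ₂ - μ₁) * Real.exp (c / (2 * σ ^ 2))
          * ((w + (1 - w) * Real.exp (c / (2 * σ ^ 2))) / w) := by
      have hσ0 : σ ≠ 0 := ne_of_gt (Set.mem_Ioi.mp hσ)
      field_simp
    rw [h1]
    have hA : (0:ℝ) ≤ (1 - w) * (μ₂ - μ₁) * Real.exp (c / (2 * σ ^ 2)) :=
      le_of_lt (mul_pos (mul_pos hw1' (sub_pos.mpr hμ)) hexp)
    have h2 : 1 ≤ (w + (1 - w) * Real.exp (c / (2 * σ ^ 2))) / w := by
      rw [le_div_iff₀ hw0]; nlinarith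
    nlinarith [mul_le_mul_of_nonneg_left h2 hA]
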